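/- If the switched system x(k+1) = A_{σ(k)} x(k) + B_{σ(k)} u(k) is current-mode-independent memory-feedback stabilizable (IFS_m), then there exists a static feedback Φ : ℝⁿ → ℝ^m that is homogeneous of degree one (Φ(λx) = λΦ(x) for all λ ∈ ℝ, x ∈ ℝⁿ) and constants M > 0, γ̃ ∈ [0,1) such that every solution of the closed loop x(k+1) = A_{σ(k)} x(k) + B_{σ(k)} Φ(x(k)) satisfies ‖x(k)‖ ≤ M γ̃^k ‖x(0)‖ for every initial state, every switching signal σ : ℕ → Σ and every k ∈ ℕ. -/

import Mathlib

open Matrix Filter ENNReal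

noncomputable section

/-- State history `[x(k), …, x(0)]` of the closed loop driven by the reversed
mode list `[i_{k-1}, …, i_0]`, under a current-mode-independent memory controller `Ψ`. -/
def memHist {n m : ℕ} {S : Type*} (A : S → Matrix (Fin n) (Fin n) ℝ)
    (B : S → Matrix (Fin n) (Fin m) ℝ)
    (Ψ : List (EuclideanSpace ℝ (Fin n)) → List S → EuclideanSpace ℝ (Fin m))
    (x0 : EuclideanSpace ℝ (Fin n)) : List S → List (EuclideanSpace ℝ (Fin n))
  | [] => [x0]
  | i :: is =>
      WithLp.toLp 2 ((A i).mulVec ((memHist A B Ψ x0 is).headD 0) +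
        (B i).mulVec (Ψ (memHist A B Ψ x0 is) is)) :: memHist A B Ψ x0 is

/-- Closed-loop solution `φ(k, σ, x0, Ψ)` under the switching signal `σ`:
at each step, `Ψ` receives the current and past states `(x(k), …, x(0))`
and the past modes `(σ(k-1), …, σ(0))`. -/
def memTraj {n m : ℕ} {S : Type*} (A : S → Matrix (Fin n) (Fin n) ℝ)
    (B : S → Matrix (Fin n) (Fin m) ℝ)
    (Ψ : List (EuclideanSpace ℝ (Fin n)) → List S → EuclideanSpace ℝ (Fin m))
    (x0 : EuclideanSpace ℝ (Fin n)) (σ : ℕ → S) (k : ℕ) : EuclideanSpace ℝ (Fin n) :=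
  (memHist A B Ψ x0 (((List.range k).reverse).map σ)).headD 0

section Aux

variable {n m : ℕ} {S : Type*}
variable (A : S → Matrix (Fin n) (Fin n) ℝ) (B : S → Matrix (Fin n) (Fin m) ℝ)

lemma memHist_ne_nil (Ψ : List (EuclideanSpace ℝ (Fin n)) → List S → EuclideanSpace ℝ (Fin m))
    (x0 : EuclideanSpace ℝ (Fin n)) (l : List S) : memHist A B Ψ x0 l ≠ [] := by
  cases l <;> simp [memHist]

lemma memTraj_zero (Ψ : List (EuclideanSpace ℝ (Fin n)) → List S → EuclideanSpace ℝ (Fin m))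
    (x0 : EuclideanSpace ℝ (Fin n)) (σ : ℕ → S) : memTraj A B Ψ x0 σ 0 = x0 := by
  simp [memTraj, memHist]

lemma headD_append {α : Type*} (l l' : List α) (d : α) (hl : l ≠ []) :
    (l ++ l').headD d = l.headD d := by
  cases l with
  | nil => exact absurd rfl hl
  | cons a t => simp

lemma headD_map_ne_nil {α β : Type*} (f : α → β) (l : List α) (d : α) (d' : β) (hl : l ≠ [])
    (hd : f d = d') : (l.map f).headD d' = f (l.headD d) := by
  cases l with
  | nil => exact absurd rfl hl
  | cons a t => simp

lemma mulVec_smul_V {k : ℕ} (M : Matrix (Fin n) (Fin k) ℝ) (c : ℝ) (v : EuclideanSpace ℝ (Fin k)) :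
    M.mulVec (c • v).ofLp = c • M.mulVec v.ofLp := by
  rw [WithLp.ofLp_smul]
  exact M.mulVec_smul c v.ofLp

lemma memHist_smul (Ψ : List (EuclideanSpace ℝ (Fin n)) → List S → EuclideanSpace ℝ (Fin m))
    (x0 : EuclideanSpace ℝ (Fin n)) {lam : ℝ} (hlam : lam ≠ 0) (l : List S) :
    memHist A B (fun hst mo => lam • Ψ (hst.map (fun y => lam⁻¹ • y)) mo) (lam • x0) l
      = (memHist A B Ψ x0 l).map (fun y => lam • y) := by
  induction l with
  | nil => simp [memHist]
  | cons i is ih =>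
      have hmm : ((memHist A B Ψ x0 is).map (fun y => lam • y)).map (fun y => lam⁻¹ • y)
          = memHist A B Ψ x0 is := by
        rw [List.map_map]
        have : (fun y : EuclideanSpace ℝ (Fin n) => lam⁻¹ • y) ∘ (fun y => lam • y) = id := by
          funext y; simp [smul_smul, inv_mul_cancel₀ hlam]
        rw [this, List.map_id]
      have hhd : ((memHist A B Ψ x0 is).map (fun y => lam • y)).headD 0
          = lam • (memHist A B Ψ x0 is).headD 0 := by
        obtain ⟨a, t, hat⟩ := List.exists_cons_of_ne_nil (memHist_ne_nil A B Ψ x0 is)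
        rw [hat]; simp
      simp only [memHist, ih, hmm, hhd, List.map_cons]
      congr 1
      rw [mulVec_smul_V, mulVec_smul_V, ← smul_add, WithLp.toLp_smul]

lemma memTraj_smul (Ψ : List (EuclideanSpace ℝ (Fin n)) → List S → EuclideanSpace ℝ (Fin m))
    (x0 : EuclideanSpace ℝ (Fin n)) {lam : ℝ} (hlam : lam ≠ 0) (σ : ℕ → S) (k : ℕ) :
    memTraj A B (fun hst mo => lam • Ψ (hst.map (fun y => lam⁻¹ • y)) mo) (lam • x0) σ k
      = lam • memTraj A B Ψ x0 σ k := by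
  unfold memTraj
  rw [memHist_smul A B Ψ x0 hlam]
  obtain ⟨a, t, hat⟩ := List.exists_cons_of_ne_nil
    (memHist_ne_nil A B Ψ x0 (((List.range k).reverse).map σ))
  rw [hat]; simp

lemma memHist_shift (Ψ : List (EuclideanSpace ℝ (Fin n)) → List S → EuclideanSpace ℝ (Fin m))
    (x0 : EuclideanSpace ℝ (Fin n)) (i : S) (l : List S) :
    memHist A B Ψ x0 (l ++ [i])
      = memHist A B (fun hst mo => Ψ (hst ++ [x0]) (mo ++ [i]))
          (WithLp.toLp 2 ((A i).mulVec x0 + (B i).mulVec (Ψ [x0] []))) l ++ [x0] := by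
  induction l with
  | nil => simp [memHist]
  | cons j js ih =>
      have hne := memHist_ne_nil A B (fun hst mo => Ψ (hst ++ [x0]) (mo ++ [i]))
        (WithLp.toLp 2 ((A i).mulVec x0 + (B i).mulVec (Ψ [x0] []))) js
      rw [List.cons_append, memHist, ih, memHist, List.cons_append,
        headD_append _ _ _ hne]

lemma range_reverse_map_succ (σ : ℕ → S) (i : S) (k : ℕ) :
    ((List.range k).reverse.map σ) ++ [i]
      = (List.range (k+1)).reverse.map (fun t => match t with | 0 => i | (s+1) => σ s) := by
  rw [List.range_succ_eq_map, List.reverse_cons]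
  rw [List.map_append, ← List.map_reverse, List.map_map]
  rfl

lemma memTraj_shift (Ψ : List (EuclideanSpace ℝ (Fin n)) → List S → EuclideanSpace ℝ (Fin m))
    (x0 : EuclideanSpace ℝ (Fin n)) (i : S) (σ : ℕ → S) (k : ℕ) :
    memTraj A B (fun hst mo => Ψ (hst ++ [x0]) (mo ++ [i]))
      (WithLp.toLp 2 ((A i).mulVec x0 + (B i).mulVec (Ψ [x0] []))) σ k
      = memTraj A B Ψ x0 (fun t => match t with | 0 => i | (s+1) => σ s) (k+1) := by
  unfold memTraj
  rw [← range_reverse_map_succ σ i k, memHist_shift A B Ψ x0 i]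
  rw [headD_append]
  exact memHist_ne_nil A B _ _ _

end Aux

open Pointwise

/-- If the system is current-mode-independent memory-feedback
stabilizable, then it is stabilizable by a static feedback that is homogeneous of
degree one. -/
theorem ifs_mem_implies_homogeneous_static {n m : ℕ} (hn : 0 < n) (hm : 0 < m) {S : Type*} [Fintype S] [Nonempty S]
    (A : S → Matrix (Fin n) (Fin n) ℝ) (B : S → Matrix (Fin n) (Fin m) ℝ)
    (h : ∃ M > (0 : ℝ), ∃ γ ∈ Set.Ico (0 : ℝ) 1,
      ∃ Ψ : List (EuclideanSpace ℝ (Fin n)) → List S → EuclideanSpace ℝ (Fin m),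
        ∀ (x0 : EuclideanSpace ℝ (Fin n)) (σ : ℕ → S) (k : ℕ),
          ‖memTraj A B Ψ x0 σ k‖ ≤ M * γ ^ k * ‖x0‖) :
    ∃ Φ : EuclideanSpace ℝ (Fin n) → EuclideanSpace ℝ (Fin m),
      (∀ (lam : ℝ) (x : EuclideanSpace ℝ (Fin n)), Φ (lam • x) = lam • Φ x) ∧
      ∃ M > (0 : ℝ), ∃ γ' ∈ Set.Ico (0 : ℝ) 1,
        ∀ (x : ℕ → EuclideanSpace ℝ (Fin n)) (σ : ℕ → S),
          (∀ k, x (k + 1) = (A (σ k)).mulVec (x k) + (B (σ k)).mulVec (Φ (x k))) →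
          ∀ k, ‖x k‖ ≤ M * γ' ^ k * ‖x 0‖ := by
  classical
  obtain ⟨M, hM, γ, hγ, Ψ₀, hΨ₀⟩ := h
  set γ₀ : ℝ := max γ (1/2) with hγ₀def
  have hγ₀pos : (0:ℝ) < γ₀ := lt_of_lt_of_le (by norm_num) (le_max_right _ _)
  have hγ₀lt : γ₀ < 1 := max_lt hγ.2 (by norm_num)
  have hγle : γ ≤ γ₀ := le_max_left _ _
  set γ' : ℝ := (γ₀ + 1) / 2 with hγ'def
  have hγ'lt : γ' < 1 := by rw [hγ'def]; linarith
  have hγ₀γ' : γ₀ < γ' := by rw [hγ'def]; linarith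
  have hγ'pos : 0 < γ' := lt_trans hγ₀pos hγ₀γ'
  -- value function
  set T : (EuclideanSpace ℝ (Fin n)) → Set ℝ :=
    fun x => {c | ∃ Ψ, ∀ (σ : ℕ → S) (k : ℕ), ‖memTraj A B Ψ x σ k‖ ≤ c * γ₀ ^ k} with hT
  set W : EuclideanSpace ℝ (Fin n) → ℝ := fun x => sInf (T x) with hWdef
  have hTmem : ∀ x, M * ‖x‖ ∈ T x := by
    intro x
    refine ⟨Ψ₀, fun σ k => ?_⟩
    calc ‖memTraj A B Ψ₀ x σ k‖ ≤ M * γ ^ k * ‖x‖ := hΨ₀ x σ k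
      _ ≤ M * ‖x‖ * γ₀ ^ k := by
          have h1 : γ ^ k ≤ γ₀ ^ k := pow_le_pow_left₀ hγ.1 hγle k
          have h2 : (0:ℝ) ≤ M * ‖x‖ := mul_nonneg (le_of_lt hM) (norm_nonneg _)
          nlinarith [norm_nonneg x, pow_nonneg hγ.1 k]
  have hTlb : ∀ x, ∀ c ∈ T x, ‖x‖ ≤ c := by
    rintro x c ⟨Ψ, hΨ⟩
    have := hΨ (fun _ => Classical.arbitrary S) 0
    simpa [memTraj_zero] using this
  have hTne : ∀ x, (T x).Nonempty := fun x => ⟨_, hTmem x⟩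
  have hTbdd : ∀ x, BddBelow (T x) := fun x => ⟨‖x‖, fun c hc => hTlb x c hc⟩
  have hWlb : ∀ x, ‖x‖ ≤ W x := fun x => le_csInf (hTne x) (hTlb x)
  have hWub : ∀ x, W x ≤ M * ‖x‖ := fun x => csInf_le (hTbdd x) (hTmem x)
  have hTsub : ∀ (lam : ℝ), lam ≠ 0 → ∀ x, ∀ c ∈ T x, |lam| * c ∈ T (lam • x) := by
    rintro lam hlam x c ⟨Ψ, hΨ⟩
    refine ⟨fun hst mo => lam • Ψ (hst.map (fun y => lam⁻¹ • y)) mo, fun σ k => ?_⟩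
    rw [memTraj_smul A B Ψ x hlam σ k, norm_smul, Real.norm_eq_abs, mul_assoc]
    exact mul_le_mul_of_nonneg_left (hΨ σ k) (abs_nonneg lam)
  have hWsmul : ∀ (lam : ℝ), lam ≠ 0 → ∀ x, W (lam • x) = |lam| * W x := by
    intro lam hlam x
    have hset : T (lam • x) = |lam| • T x := by
      ext c
      constructor
      · intro hc
        have h2 := hTsub lam⁻¹ (inv_ne_zero hlam) (lam • x) c hc
        rw [inv_smul_smul₀ hlam] at h2
        refine ⟨|lam⁻¹| * c, h2, ?_⟩
        show |lam| • (|lam⁻¹| * c) = c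
        rw [smul_eq_mul, abs_inv]
        field_simp
      · rintro ⟨d, hd, rfl⟩
        simpa [smul_eq_mul] using hTsub lam hlam x d hd
    rw [hWdef]
    simp only
    rw [hset, Real.sInf_smul_of_nonneg (abs_nonneg lam), smul_eq_mul]
  -- Bellman step
  have bell : ∀ x : EuclideanSpace ℝ (Fin n), x ≠ 0 →
      ∃ u : EuclideanSpace ℝ (Fin m), ∀ i : S,
        W (WithLp.toLp 2 ((A i).mulVec x + (B i).mulVec u)) ≤ γ' * W x := by
    intro x hx
    have hWx : 0 < W x := lt_of_lt_of_le (norm_pos_iff.mpr hx) (hWlb x)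
    have hε : 0 < (γ' - γ₀) / γ₀ * W x := by
      apply mul_pos _ hWx
      apply div_pos (by linarith) hγ₀pos
    obtain ⟨c, hcT, hclt⟩ := Real.lt_sInf_add_pos (hTne x) hε
    obtain ⟨Ψ, hΨ⟩ := hcT
    refine ⟨Ψ [x] [], fun i => ?_⟩
    have hmem : γ₀ * c ∈ T (WithLp.toLp 2 ((A i).mulVec x + (B i).mulVec (Ψ [x] []))) := by
      refine ⟨fun hst mo => Ψ (hst ++ [x]) (mo ++ [i]), fun σ k => ?_⟩
      rw [memTraj_shift A B Ψ x i σ k]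
      calc ‖memTraj A B Ψ x _ (k+1)‖ ≤ c * γ₀ ^ (k+1) := hΨ _ (k+1)
        _ = (γ₀ * c) * γ₀ ^ k := by ring
    have hWle : W (WithLp.toLp 2 ((A i).mulVec x + (B i).mulVec (Ψ [x] []))) ≤ γ₀ * c :=
      csInf_le (hTbdd _) hmem
    have hcW : c < W x + (γ' - γ₀) / γ₀ * W x := hclt
    calc W (WithLp.toLp 2 ((A i).mulVec x + (B i).mulVec (Ψ [x] []))) ≤ γ₀ * c := hWle
      _ ≤ γ₀ * (W x + (γ' - γ₀) / γ₀ * W x) :=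
          mul_le_mul_of_nonneg_left (le_of_lt hcW) (le_of_lt hγ₀pos)
      _ = γ' * W x := by field_simp; ring
  -- choose the controls
  have bell' : ∀ y : EuclideanSpace ℝ (Fin n),
      ∃ u : EuclideanSpace ℝ (Fin m), y ≠ 0 →
        ∀ i : S, W (WithLp.toLp 2 ((A i).mulVec y + (B i).mulVec u)) ≤ γ' * W y := by
    intro y
    by_cases hy : y = 0
    · exact ⟨0, fun hc => absurd hy hc⟩
    · obtain ⟨u, hu⟩ := bell y hy
      exact ⟨u, fun _ => hu⟩
  choose u hu using bell'
  -- projective representative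
  set rep : EuclideanSpace ℝ (Fin n) → EuclideanSpace ℝ (Fin n) :=
    fun x => if hx : x ≠ 0 then (Projectivization.mk ℝ x hx).rep else 0 with hrepdef
  have hrep_ne : ∀ x, x ≠ 0 → rep x ≠ 0 := by
    intro x hx
    rw [hrepdef]
    simp only [dif_pos hx]
    exact Projectivization.rep_nonzero _
  have hrep_spec : ∀ x, x ≠ 0 → ∃ c : ℝ, x = c • rep x := by
    intro x hx
    have hmk := Projectivization.mk_rep (Projectivization.mk ℝ x hx)
    rw [Projectivization.mk_eq_mk_iff] at hmk
    obtain ⟨a, ha⟩ := hmk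
    refine ⟨((a : ℝ))⁻¹, ?_⟩
    rw [hrepdef]
    simp only [dif_pos hx]
    rw [← ha, Units.smul_def, smul_smul, inv_mul_cancel₀ (Units.ne_zero a), one_smul]
  have hrep_smul : ∀ x, x ≠ 0 → ∀ lam : ℝ, lam ≠ 0 → rep (lam • x) = rep x := by
    intro x hx lam hlam
    have hlx : lam • x ≠ 0 := smul_ne_zero hlam hx
    have hmk : Projectivization.mk ℝ (lam • x) hlx = Projectivization.mk ℝ x hx := by
      rw [Projectivization.mk_eq_mk_iff]
      exact ⟨Units.mk0 lam hlam, rfl⟩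
    rw [hrepdef]
    simp only [dif_pos hlx, dif_pos hx, hmk]
  have hco' : ∀ x : EuclideanSpace ℝ (Fin n), ∃ c : ℝ, x ≠ 0 → x = c • rep x := by
    intro x
    by_cases hx : x = 0
    · exact ⟨0, fun hc => absurd hx hc⟩
    · obtain ⟨c, hc⟩ := hrep_spec x hx
      exact ⟨c, fun _ => hc⟩
  choose co hco using hco'
  have hco_ne : ∀ x, x ≠ 0 → co x ≠ 0 := by
    intro x hx hc
    apply hx
    rw [hco x hx, hc, zero_smul]
  have hco_smul : ∀ x, x ≠ 0 → ∀ lam : ℝ, lam ≠ 0 → co (lam • x) = lam * co x := by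
    intro x hx lam hlam
    have hlx : lam • x ≠ 0 := smul_ne_zero hlam hx
    have h1 : lam • x = co (lam • x) • rep x := by
      rw [← hrep_smul x hx lam hlam]
      exact hco _ hlx
    have h2 : lam • x = (lam * co x) • rep x := by
      rw [← smul_smul, ← hco x hx]
    exact smul_left_injective ℝ (hrep_ne x hx) (h1.symm.trans h2)
  set Φ : EuclideanSpace ℝ (Fin n) → EuclideanSpace ℝ (Fin m) :=
    fun x => if x = 0 then 0 else co x • u (rep x) with hΦdef
  have hΦ0 : Φ 0 = 0 := by rw [hΦdef]; simp
  refine ⟨Φ, ?_, M, hM, γ', ⟨le_of_lt hγ'pos, hγ'lt⟩, ?_⟩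
  · -- homogeneity
    intro lam x
    by_cases hx : x = 0
    · rw [hx, smul_zero, hΦ0, smul_zero]
    by_cases hlam : lam = 0
    · rw [hlam, zero_smul, zero_smul, hΦ0]
    · have hlx : lam • x ≠ 0 := smul_ne_zero hlam hx
      rw [hΦdef]
      simp only [if_neg hlx, if_neg hx]
      rw [hrep_smul x hx lam hlam, hco_smul x hx lam hlam, smul_smul]
  · -- stability
    intro x σ hrec
    have hW0 : W 0 = 0 := le_antisymm (by simpa using hWub 0) (by simpa using hWlb 0)
    have key : ∀ k, W (x (k+1)) ≤ γ' * W (x k) := by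
      intro k
      by_cases h0 : x k = 0
      · have hx1 : x (k+1) = 0 := by
          apply WithLp.ofLp_injective 2
          rw [hrec k, h0, hΦ0]
          show (A (σ k)).mulVec (0 : Fin n → ℝ) + (B (σ k)).mulVec (0 : Fin m → ℝ) = 0
          rw [Matrix.mulVec_zero, Matrix.mulVec_zero, add_zero]
        rw [hx1, h0, hW0]
        simp
      · have hxdecomp : x k = co (x k) • rep (x k) := hco _ h0
        have hcne : co (x k) ≠ 0 := hco_ne _ h0
        have hstep : x (k+1)
            = co (x k) • WithLp.toLp 2 ((A (σ k)).mulVec (rep (x k)) + (B (σ k)).mulVec (u (rep (x k)))) := by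
          apply WithLp.ofLp_injective 2
          rw [hrec k, WithLp.ofLp_smul, WithLp.ofLp_toLp]
          have hΦx : Φ (x k) = co (x k) • u (rep (x k)) := by
            rw [hΦdef]; simp only [if_neg h0]
          have hA : (A (σ k)).mulVec (co (x k) • rep (x k)).ofLp
              = co (x k) • (A (σ k)).mulVec (rep (x k)) :=
            mulVec_smul_V (A (σ k)) (co (x k)) (rep (x k))
          rw [hΦx, mulVec_smul_V, smul_add, ← hA, ← hxdecomp]
        rw [hstep, hWsmul _ hcne]
        have hb := hu (rep (x k)) (hrep_ne _ h0) (σ k)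
        calc |co (x k)| * W (WithLp.toLp 2 ((A (σ k)).mulVec (rep (x k)) + (B (σ k)).mulVec (u (rep (x k)))))
            ≤ |co (x k)| * (γ' * W (rep (x k))) :=
              mul_le_mul_of_nonneg_left hb (abs_nonneg _)
          _ = γ' * (|co (x k)| * W (rep (x k))) := by ring
          _ = γ' * W (co (x k) • rep (x k)) := by rw [hWsmul _ hcne]
          _ = γ' * W (x k) := by rw [← hxdecomp]
    have hWk : ∀ k, W (x k) ≤ γ' ^ k * W (x 0) := by
      intro k
      induction k with
      | zero => simp
      | succ k ih =>
          calc W (x (k+1)) ≤ γ' * W (x k) := key k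
            _ ≤ γ' * (γ' ^ k * W (x 0)) := mul_le_mul_of_nonneg_left ih (le_of_lt hγ'pos)
            _ = γ' ^ (k+1) * W (x 0) := by ring
    intro k
    calc ‖x k‖ ≤ W (x k) := hWlb _
      _ ≤ γ' ^ k * W (x 0) := hWk k
      _ ≤ γ' ^ k * (M * ‖x 0‖) :=
          mul_le_mul_of_nonneg_left (hWub _) (pow_nonneg (le_of_lt hγ'pos) k)
      _ = M * γ' ^ k * ‖x 0‖ := by ring
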